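/- Let G₁ = (V₁, E₁) and G₂ = (V₂, E₂) be graphs on which every permutation can be routed in depth at most D₁ and D₂ respectively. Then every permutation on the Cartesian product graph G₁ × G₂ can be routed in depth at most 2·D₁ + D₂. Specifically, any permutation α on V₁ × V₂ factors as α = α₁ ∘ α₂ ∘ α₁' where α₁, α₁' are column permutations (preserving each fiber V₁ × {u₂}... i.e., permutations acting only within copies of G₁) and α₂ is a row permutation (acting only within copies of G₂). -/

import Mathlib

/-- A *simple permutation* on a graph `G`: a product of transpositions along pairwise
vertex-disjoint edges of `G`. -/
def IsSimplePerm {V : Type*} (G : SimpleGraph V) (β : Equiv.Perm V) : Prop :=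
  ∀ v, β v = v ∨ (β (β v) = v ∧ G.Adj v (β v))

/-- `CanRoute G D`: every permutation on the vertices of `G` can be written as a product of
at most `D` simple permutations. -/
def CanRoute {V : Type*} (G : SimpleGraph V) (D : ℕ) : Prop :=
  ∀ σ : Equiv.Perm V, ∃ l : List (Equiv.Perm V),
    l.length ≤ D ∧ (∀ β ∈ l, IsSimplePerm G β) ∧ l.prod = σ

section Aux

open Finset

lemma isSimple_one {V : Type*} (G : SimpleGraph V) : IsSimplePerm G 1 :=
  fun _ => Or.inl rfl

/-- Core combinatorial lemma (edge coloring of regular bipartite multigraphs via Hall):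
given a finset `S` and two functions `f g : X → W` all of whose fibers within `S` have the
same size `k`, there is a "row labelling" `r` with values `< k` which is injective on each
fiber of `f` and on each fiber of `g`. -/
lemma transversal_aux {X W : Type*} [Fintype W] [DecidableEq X] [DecidableEq W] :
    ∀ (k : ℕ) (S : Finset X) (f g : X → W),
      (∀ w, (S.filter fun x => f x = w).card = k) →
      (∀ w, (S.filter fun x => g x = w).card = k) →
      ∃ r : X → ℕ, (∀ x ∈ S, r x < k) ∧
        (∀ x ∈ S, ∀ y ∈ S, r x = r y → f x = f y → x = y) ∧
        (∀ x ∈ S, ∀ y ∈ S, r x = r y → g x = g y → x = y) := by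
  intro k
  induction k with
  | zero =>
    intro S f g hf _
    have hS : ∀ x, x ∉ S := by
      intro x hx
      have : x ∈ S.filter fun y => f y = f x := mem_filter.mpr ⟨hx, rfl⟩
      rw [Finset.card_eq_zero.mp (hf (f x))] at this
      exact absurd this (Finset.notMem_empty x)
    exact ⟨fun _ => 0, fun x hx => absurd hx (hS x), fun x hx => absurd hx (hS x),
      fun x hx => absurd hx (hS x)⟩
  | succ k ih =>
    intro S f g hf hg
    classical
    -- Hall's condition for the bipartite multigraph with columns as vertices
    set t : W → Finset W := fun w => (S.filter fun x => f x = w).image g with ht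
    have hall : ∀ s : Finset W, s.card ≤ (s.biUnion t).card := by
      intro s
      have hA : (S.filter fun x => f x ∈ s).card = s.card * (k + 1) := by
        rw [Finset.card_eq_sum_card_fiberwise (f := f) (s := S.filter fun x => f x ∈ s) (t := s)
          (fun x hx => (mem_filter.mp hx).2)]
        have : ∀ w ∈ s, (((S.filter fun x => f x ∈ s)).filter fun x => f x = w).card = k + 1 := by
          intro w hw
          rw [Finset.filter_filter]
          rw [show (S.filter fun x => f x ∈ s ∧ f x = w) = S.filter fun x => f x = w from ?_]
          · exact hf w
          · apply Finset.filter_congr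
            intro x _
            constructor
            · rintro ⟨_, h⟩; exact h
            · intro h; exact ⟨h ▸ hw, h⟩
        rw [Finset.sum_congr rfl this, Finset.sum_const, smul_eq_mul]
      have hB : (S.filter fun x => g x ∈ s.biUnion t).card = (s.biUnion t).card * (k + 1) := by
        rw [Finset.card_eq_sum_card_fiberwise (f := g) (s := S.filter fun x => g x ∈ s.biUnion t) (t := s.biUnion t)
          (fun x hx => (mem_filter.mp hx).2)]
        have : ∀ w ∈ s.biUnion t,
            (((S.filter fun x => g x ∈ s.biUnion t)).filter fun x => g x = w).card = k + 1 := by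
          intro w hw
          rw [Finset.filter_filter]
          rw [show (S.filter fun x => g x ∈ s.biUnion t ∧ g x = w) = S.filter fun x => g x = w
            from ?_]
          · exact hg w
          · apply Finset.filter_congr
            intro x _
            constructor
            · rintro ⟨_, h⟩; exact h
            · intro h; exact ⟨h ▸ hw, h⟩
        rw [Finset.sum_congr rfl this, Finset.sum_const, smul_eq_mul]
      have hsub : (S.filter fun x => f x ∈ s) ⊆ (S.filter fun x => g x ∈ s.biUnion t) := by
        intro x hx
        obtain ⟨hxS, hxs⟩ := mem_filter.mp hx
        refine mem_filter.mpr ⟨hxS, Finset.mem_biUnion.mpr ⟨f x, hxs, ?_⟩⟩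
        exact Finset.mem_image.mpr ⟨x, mem_filter.mpr ⟨hxS, rfl⟩, rfl⟩
      have := Finset.card_le_card hsub
      rw [hA, hB] at this
      exact Nat.le_of_mul_le_mul_right this (Nat.succ_pos k)
    obtain ⟨c, hcinj, hct⟩ := (Finset.all_card_le_biUnion_card_iff_exists_injective t).mp hall
    have hc : ∀ w, ∃ x, x ∈ S ∧ f x = w ∧ g x = c w := by
      intro w
      obtain ⟨x, hx, hgx⟩ := Finset.mem_image.mp (hct w)
      obtain ⟨hxS, hfx⟩ := mem_filter.mp hx
      exact ⟨x, hxS, hfx, hgx⟩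
    choose p hpS hpf hpg using hc
    -- the transversal
    set T : Finset X := Finset.image p univ with hT
    have hmemT : ∀ x, x ∈ T ↔ ∃ w, p w = x := by
      intro x
      simp [hT]
    set S' : Finset X := S \ T with hS'
    have hf' : ∀ w, (S'.filter fun x => f x = w).card = k := by
      intro w
      have heq : (S'.filter fun x => f x = w) = (S.filter fun x => f x = w).erase (p w) := by
        ext x
        simp only [hS', Finset.mem_erase, Finset.mem_filter, Finset.mem_sdiff]
        constructor
        · rintro ⟨⟨hxS, hxT⟩, hfx⟩
          refine ⟨?_, hxS, hfx⟩
          rintro rfl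
          exact hxT ((hmemT _).mpr ⟨w, rfl⟩)
        · rintro ⟨hne, hxS, hfx⟩
          refine ⟨⟨hxS, ?_⟩, hfx⟩
          intro hxT
          obtain ⟨w', rfl⟩ := (hmemT _).mp hxT
          have : w' = w := by rw [← hfx, hpf w']
          exact hne (by rw [this])
      rw [heq, Finset.card_erase_of_mem (mem_filter.mpr ⟨hpS w, hpf w⟩), hf w]
      omega
    have hg' : ∀ w, (S'.filter fun x => g x = w).card = k := by
      intro w
      have hcsurj : Function.Surjective c := Finite.injective_iff_surjective.mp hcinj
      obtain ⟨u, hu⟩ := hcsurj w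
      have heq : (S'.filter fun x => g x = w) = (S.filter fun x => g x = w).erase (p u) := by
        ext x
        simp only [hS', Finset.mem_erase, Finset.mem_filter, Finset.mem_sdiff]
        constructor
        · rintro ⟨⟨hxS, hxT⟩, hgx⟩
          refine ⟨?_, hxS, hgx⟩
          rintro rfl
          exact hxT ((hmemT _).mpr ⟨u, rfl⟩)
        · rintro ⟨hne, hxS, hgx⟩
          refine ⟨⟨hxS, ?_⟩, hgx⟩
          intro hxT
          obtain ⟨w', rfl⟩ := (hmemT _).mp hxT
          have : c w' = c u := by rw [← hpg w', hgx, hu]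
          exact hne (by rw [hcinj this])
      rw [heq, Finset.card_erase_of_mem (mem_filter.mpr ⟨hpS u, by rw [hpg, hu]⟩), hg w]
      omega
    obtain ⟨r', hr'lt, hr'f, hr'g⟩ := ih S' f g hf' hg'
    refine ⟨fun x => if x ∈ T then k else r' x, ?_, ?_, ?_⟩
    · intro x hx
      by_cases hxT : x ∈ T
      · simp [hxT]
      · have : x ∈ S' := Finset.mem_sdiff.mpr ⟨hx, hxT⟩
        simp only [hxT, if_false]
        exact Nat.lt_succ_of_lt (hr'lt x this)
    · intro x hx y hy hr hfxy
      by_cases hxT : x ∈ T <;> by_cases hyT : y ∈ T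
      · obtain ⟨w, rfl⟩ := (hmemT x).mp hxT
        obtain ⟨w', rfl⟩ := (hmemT y).mp hyT
        have : w = w' := by rw [← hpf w, ← hpf w', hfxy]
        rw [this]
      · have hy' : y ∈ S' := Finset.mem_sdiff.mpr ⟨hy, hyT⟩
        simp only [hxT, hyT, if_true, if_false] at hr
        exact absurd hr.symm (Nat.ne_of_lt (hr'lt y hy'))
      · have hx' : x ∈ S' := Finset.mem_sdiff.mpr ⟨hx, hxT⟩
        simp only [hxT, hyT, if_true, if_false] at hr
        exact absurd hr (Nat.ne_of_lt (hr'lt x hx'))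
      · have hx' : x ∈ S' := Finset.mem_sdiff.mpr ⟨hx, hxT⟩
        have hy' : y ∈ S' := Finset.mem_sdiff.mpr ⟨hy, hyT⟩
        simp only [hxT, hyT, if_false] at hr
        exact hr'f x hx' y hy' hr hfxy
    · intro x hx y hy hr hgxy
      by_cases hxT : x ∈ T <;> by_cases hyT : y ∈ T
      · obtain ⟨w, rfl⟩ := (hmemT x).mp hxT
        obtain ⟨w', rfl⟩ := (hmemT y).mp hyT
        have : c w = c w' := by rw [← hpg w, ← hpg w', hgxy]
        rw [hcinj this]
      · have hy' : y ∈ S' := Finset.mem_sdiff.mpr ⟨hy, hyT⟩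
        simp only [hxT, hyT, if_true, if_false] at hr
        exact absurd hr.symm (Nat.ne_of_lt (hr'lt y hy'))
      · have hx' : x ∈ S' := Finset.mem_sdiff.mpr ⟨hx, hxT⟩
        simp only [hxT, hyT, if_true, if_false] at hr
        exact absurd hr (Nat.ne_of_lt (hr'lt x hx'))
      · have hx' : x ∈ S' := Finset.mem_sdiff.mpr ⟨hx, hxT⟩
        have hy' : y ∈ S' := Finset.mem_sdiff.mpr ⟨hy, hyT⟩
        simp only [hxT, hyT, if_false] at hr
        exact hr'g x hx' y hy' hr hgxy

/-- The column/row/column factorization of an arbitrary permutation of a product. -/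
lemma decomp_aux {V₁ V₂ : Type*} [Fintype V₁] [Fintype V₂] (α : Equiv.Perm (V₁ × V₂)) :
    ∃ α₁ α₂ α₁' : Equiv.Perm (V₁ × V₂),
      (∀ x, (α₁ x).2 = x.2) ∧ (∀ x, (α₁' x).2 = x.2) ∧ (∀ x, (α₂ x).1 = x.1) ∧
      α = α₁ * α₂ * α₁' := by
  classical
  have hf : ∀ w : V₂, ((univ : Finset (V₁ × V₂)).filter fun x => x.2 = w).card
      = Fintype.card V₁ := by
    intro w
    have : ((univ : Finset (V₁ × V₂)).filter fun x => x.2 = w)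
        = univ.image (fun v : V₁ => (v, w)) := by
      ext x
      simp only [Finset.mem_filter, Finset.mem_univ, true_and, Finset.mem_image]
      constructor
      · intro h; exact ⟨x.1, by rw [← h]⟩
      · rintro ⟨v, rfl⟩; rfl
    rw [this, Finset.card_image_of_injective _ (fun a b h => (Prod.mk.injEq _ _ _ _).mp h |>.1),
      Finset.card_univ]
  have hg : ∀ w : V₂, ((univ : Finset (V₁ × V₂)).filter fun x => (α x).2 = w).card
      = Fintype.card V₁ := by
    intro w
    have : ((univ : Finset (V₁ × V₂)).filter fun x => (α x).2 = w)
        = ((univ : Finset (V₁ × V₂)).filter fun x => x.2 = w).image α.symm := by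
      ext x
      simp only [Finset.mem_filter, Finset.mem_univ, true_and, Finset.mem_image]
      constructor
      · intro h; exact ⟨α x, h, α.symm_apply_apply x⟩
      · rintro ⟨y, hy, rfl⟩; rwa [α.apply_symm_apply]
    rw [this, Finset.card_image_of_injective _ α.symm.injective, hf]
  obtain ⟨r, hrlt, hrf, hrg⟩ := transversal_aux (Fintype.card V₁) (univ : Finset (V₁ × V₂))
    Prod.snd (fun x => (α x).2) hf hg
  set enum : Fin (Fintype.card V₁) ≃ V₁ := (Fintype.equivFin V₁).symm with henum
  set ρ : V₁ × V₂ → V₁ := fun x => enum ⟨r x, hrlt x (Finset.mem_univ x)⟩ with hρ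
  have hρinj : ∀ x y, ρ x = ρ y → r x = r y := by
    intro x y h
    have h2 := enum.injective h
    exact congrArg Fin.val h2
  have he₁ : Function.Injective (fun x : V₁ × V₂ => (ρ x, x.2)) := by
    intro x y h
    obtain ⟨h1, h2⟩ := Prod.mk.injEq _ _ _ _ ▸ h
    exact hrf x (Finset.mem_univ x) y (Finset.mem_univ y) (hρinj x y h1) h2
  have he₂ : Function.Injective (fun x : V₁ × V₂ => (ρ x, (α x).2)) := by
    intro x y h
    obtain ⟨h1, h2⟩ := Prod.mk.injEq _ _ _ _ ▸ h
    exact hrg x (Finset.mem_univ x) y (Finset.mem_univ y) (hρinj x y h1) h2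
  set e₁ : Equiv.Perm (V₁ × V₂) :=
    Equiv.ofBijective _ (Finite.injective_iff_bijective.mp he₁) with he₁d
  set e₂ : Equiv.Perm (V₁ × V₂) :=
    Equiv.ofBijective _ (Finite.injective_iff_bijective.mp he₂) with he₂d
  have he₁app : ∀ x, e₁ x = (ρ x, x.2) := fun x => rfl
  have he₂app : ∀ x, e₂ x = (ρ x, (α x).2) := fun x => rfl
  refine ⟨α * e₂⁻¹, e₂ * e₁⁻¹, e₁, ?_, ?_, ?_, ?_⟩
  · intro y
    obtain ⟨x, rfl⟩ := e₂.surjective y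
    show (α (e₂⁻¹ (e₂ x))).2 = (e₂ x).2
    rw [Equiv.Perm.inv_def, Equiv.symm_apply_apply, he₂app]
  · intro x
    rw [he₁app]
  · intro y
    obtain ⟨x, rfl⟩ := e₁.surjective y
    show (e₂ (e₁⁻¹ (e₁ x))).1 = (e₁ x).1
    rw [Equiv.Perm.inv_def, Equiv.symm_apply_apply, he₂app, he₁app]
  · group

lemma prodCongrLeft_mul {a b : Type*} (e f : b → Equiv.Perm a) :
    Equiv.prodCongrLeft e * Equiv.prodCongrLeft f
      = Equiv.prodCongrLeft (fun x => e x * f x) :=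
  Equiv.ext fun _ => rfl

lemma prodCongrRight_mul {a b : Type*} (e f : a → Equiv.Perm b) :
    Equiv.prodCongrRight e * Equiv.prodCongrRight f
      = Equiv.prodCongrRight (fun x => e x * f x) :=
  Equiv.ext fun _ => rfl

lemma isSimple_prodCongrLeft {V₁ V₂ : Type*} (G₁ : SimpleGraph V₁) (G₂ : SimpleGraph V₂)
    (σ : V₂ → Equiv.Perm V₁) (h : ∀ w, IsSimplePerm G₁ (σ w)) :
    IsSimplePerm (SimpleGraph.boxProd G₁ G₂) (Equiv.prodCongrLeft σ) := by
  intro x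
  rcases h x.2 x.1 with h0 | ⟨h1, h2⟩
  · left
    show (σ x.2 x.1, x.2) = x
    rw [h0]
  · right
    constructor
    · show (σ x.2 (σ x.2 x.1), x.2) = x
      rw [h1]
    · rw [SimpleGraph.boxProd_adj]
      exact Or.inl ⟨h2, rfl⟩

lemma isSimple_prodCongrRight {V₁ V₂ : Type*} (G₁ : SimpleGraph V₁) (G₂ : SimpleGraph V₂)
    (σ : V₁ → Equiv.Perm V₂) (h : ∀ w, IsSimplePerm G₂ (σ w)) :
    IsSimplePerm (SimpleGraph.boxProd G₁ G₂) (Equiv.prodCongrRight σ) := by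
  intro x
  rcases h x.1 x.2 with h0 | ⟨h1, h2⟩
  · left
    show (x.1, σ x.1 x.2) = x
    rw [h0]
  · right
    constructor
    · show (x.1, σ x.1 (σ x.1 x.2)) = x
      rw [h1]
    · rw [SimpleGraph.boxProd_adj]
      exact Or.inr ⟨h2, rfl⟩

lemma lift_left {V₁ V₂ : Type*} (G₁ : SimpleGraph V₁) (G₂ : SimpleGraph V₂) (D : ℕ) :
    ∀ (F : V₂ → List (Equiv.Perm V₁)),
      (∀ w, (F w).length ≤ D) → (∀ w, ∀ β ∈ F w, IsSimplePerm G₁ β) →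
      ∃ l : List (Equiv.Perm (V₁ × V₂)), l.length ≤ D ∧
        (∀ β ∈ l, IsSimplePerm (SimpleGraph.boxProd G₁ G₂) β) ∧
        l.prod = Equiv.prodCongrLeft (fun w => (F w).prod) := by
  induction D with
  | zero =>
    intro F hlen _
    refine ⟨[], le_refl _, by simp, ?_⟩
    have hF : ∀ w, F w = [] := fun w => List.length_eq_zero_iff.mp (Nat.le_zero.mp (hlen w))
    have : (fun w => (F w).prod) = fun _ => (1 : Equiv.Perm V₁) := funext fun w => by
      rw [hF w, List.prod_nil]
    rw [this, List.prod_nil]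
    exact Equiv.ext fun _ => rfl
  | succ D ihD =>
    intro F hlen hsimp
    classical
    set hd : V₂ → Equiv.Perm V₁ := fun w =>
      match F w with
      | [] => 1
      | a :: _ => a with hhd
    set tl : V₂ → List (Equiv.Perm V₁) := fun w => (F w).tail with htl
    have hkey : ∀ w, (F w).prod = hd w * (tl w).prod := by
      intro w
      simp only [hhd, htl]
      cases F w with
      | nil => simp
      | cons a l => simp
    have hdsimp : ∀ w, IsSimplePerm G₁ (hd w) := by
      intro w
      simp only [hhd]
      cases hFw : F w with
      | nil => exact isSimple_one G₁
      | cons a l => exact hsimp w a (by rw [hFw]; exact List.mem_cons_self)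
    have htllen : ∀ w, (tl w).length ≤ D := by
      intro w
      simp only [htl, List.length_tail]
      have := hlen w
      omega
    have htlsimp : ∀ w, ∀ β ∈ tl w, IsSimplePerm G₁ β := by
      intro w β hβ
      exact hsimp w β (List.mem_of_mem_tail hβ)
    obtain ⟨l', hl1, hl2, hl3⟩ := ihD tl htllen htlsimp
    refine ⟨Equiv.prodCongrLeft hd :: l', by simpa using Nat.succ_le_succ hl1, ?_, ?_⟩
    · intro β hβ
      rcases List.mem_cons.mp hβ with rfl | hβ
      · exact isSimple_prodCongrLeft G₁ G₂ hd hdsimp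
      · exact hl2 β hβ
    · rw [List.prod_cons, hl3, prodCongrLeft_mul]
      congr 1
      funext w
      exact (hkey w).symm

lemma lift_right {V₁ V₂ : Type*} (G₁ : SimpleGraph V₁) (G₂ : SimpleGraph V₂) (D : ℕ) :
    ∀ (F : V₁ → List (Equiv.Perm V₂)),
      (∀ w, (F w).length ≤ D) → (∀ w, ∀ β ∈ F w, IsSimplePerm G₂ β) →
      ∃ l : List (Equiv.Perm (V₁ × V₂)), l.length ≤ D ∧
        (∀ β ∈ l, IsSimplePerm (SimpleGraph.boxProd G₁ G₂) β) ∧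
        l.prod = Equiv.prodCongrRight (fun w => (F w).prod) := by
  induction D with
  | zero =>
    intro F hlen _
    refine ⟨[], le_refl _, by simp, ?_⟩
    have hF : ∀ w, F w = [] := fun w => List.length_eq_zero_iff.mp (Nat.le_zero.mp (hlen w))
    have : (fun w => (F w).prod) = fun _ => (1 : Equiv.Perm V₂) := funext fun w => by
      rw [hF w, List.prod_nil]
    rw [this, List.prod_nil]
    exact Equiv.ext fun _ => rfl
  | succ D ihD =>
    intro F hlen hsimp
    classical
    set hd : V₁ → Equiv.Perm V₂ := fun w =>
      match F w with
      | [] => 1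
      | a :: _ => a with hhd
    set tl : V₁ → List (Equiv.Perm V₂) := fun w => (F w).tail with htl
    have hkey : ∀ w, (F w).prod = hd w * (tl w).prod := by
      intro w
      simp only [hhd, htl]
      cases F w with
      | nil => simp
      | cons a l => simp
    have hdsimp : ∀ w, IsSimplePerm G₂ (hd w) := by
      intro w
      simp only [hhd]
      cases hFw : F w with
      | nil => exact isSimple_one G₂
      | cons a l => exact hsimp w a (by rw [hFw]; exact List.mem_cons_self)
    have htllen : ∀ w, (tl w).length ≤ D := by
      intro w
      simp only [htl, List.length_tail]
      have := hlen w
      omega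
    have htlsimp : ∀ w, ∀ β ∈ tl w, IsSimplePerm G₂ β := by
      intro w β hβ
      exact hsimp w β (List.mem_of_mem_tail hβ)
    obtain ⟨l', hl1, hl2, hl3⟩ := ihD tl htllen htlsimp
    refine ⟨Equiv.prodCongrRight hd :: l', by simpa using Nat.succ_le_succ hl1, ?_, ?_⟩
    · intro β hβ
      rcases List.mem_cons.mp hβ with rfl | hβ
      · exact isSimple_prodCongrRight G₁ G₂ hd hdsimp
      · exact hl2 β hβ
    · rw [List.prod_cons, hl3, prodCongrRight_mul]
      congr 1
      funext w
      exact (hkey w).symm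

lemma route_left {V₁ V₂ : Type*} [Fintype V₁] [Fintype V₂]
    (G₁ : SimpleGraph V₁) (G₂ : SimpleGraph V₂) {D₁ : ℕ} (hG : CanRoute G₁ D₁)
    (γ : Equiv.Perm (V₁ × V₂)) (hγ : ∀ x, (γ x).2 = x.2) :
    ∃ l : List (Equiv.Perm (V₁ × V₂)), l.length ≤ D₁ ∧
      (∀ β ∈ l, IsSimplePerm (SimpleGraph.boxProd G₁ G₂) β) ∧ l.prod = γ := by
  classical
  have hinj : ∀ w : V₂, Function.Injective (fun v : V₁ => (γ (v, w)).1) := by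
    intro w a b h
    have h2 : γ (a, w) = γ (b, w) := Prod.ext h (by rw [hγ (a, w), hγ (b, w)])
    have := γ.injective h2
    exact ((Prod.mk.injEq _ _ _ _).mp this).1
  set σ : V₂ → Equiv.Perm V₁ := fun w =>
    Equiv.ofBijective _ (Finite.injective_iff_bijective.mp (hinj w)) with hσ
  have hγσ : γ = Equiv.prodCongrLeft σ := by
    apply Equiv.ext
    intro x
    show γ x = (σ x.2 x.1, x.2)
    have : σ x.2 x.1 = (γ (x.1, x.2)).1 := rfl
    rw [this]
    exact Prod.ext rfl (hγ x)
  choose F hFlen hFsimp hFprod using fun w => hG (σ w)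
  obtain ⟨l, h1, h2, h3⟩ := lift_left G₁ G₂ D₁ F hFlen hFsimp
  refine ⟨l, h1, h2, ?_⟩
  rw [h3, hγσ]
  congr 1
  funext w
  exact hFprod w

lemma route_right {V₁ V₂ : Type*} [Fintype V₁] [Fintype V₂]
    (G₁ : SimpleGraph V₁) (G₂ : SimpleGraph V₂) {D₂ : ℕ} (hG : CanRoute G₂ D₂)
    (γ : Equiv.Perm (V₁ × V₂)) (hγ : ∀ x, (γ x).1 = x.1) :
    ∃ l : List (Equiv.Perm (V₁ × V₂)), l.length ≤ D₂ ∧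
      (∀ β ∈ l, IsSimplePerm (SimpleGraph.boxProd G₁ G₂) β) ∧ l.prod = γ := by
  classical
  have hinj : ∀ w : V₁, Function.Injective (fun v : V₂ => (γ (w, v)).2) := by
    intro w a b h
    have h2 : γ (w, a) = γ (w, b) := Prod.ext (by rw [hγ (w, a), hγ (w, b)]) h
    have := γ.injective h2
    exact ((Prod.mk.injEq _ _ _ _).mp this).2
  set σ : V₁ → Equiv.Perm V₂ := fun w =>
    Equiv.ofBijective _ (Finite.injective_iff_bijective.mp (hinj w)) with hσ
  have hγσ : γ = Equiv.prodCongrRight σ := by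
    apply Equiv.ext
    intro x
    show γ x = (x.1, σ x.1 x.2)
    have : σ x.1 x.2 = (γ (x.1, x.2)).2 := rfl
    rw [this]
    exact Prod.ext (hγ x) rfl
  choose F hFlen hFsimp hFprod using fun w => hG (σ w)
  obtain ⟨l, h1, h2, h3⟩ := lift_right G₁ G₂ D₂ F hFlen hFsimp
  refine ⟨l, h1, h2, ?_⟩
  rw [h3, hγσ]
  congr 1
  funext w
  exact hFprod w

end Aux

/-- Annexstein–Baumslag product routing. If every permutation on `G₁` can
be routed in depth `D₁` and every permutation on `G₂` in depth `D₂`, then every permutation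
`α` on the Cartesian (box) product `G₁ □ G₂` can be routed in depth `2·D₁ + D₂`; moreover
`α = α₁ ∘ α₂ ∘ α₁'` where `α₁, α₁'` are column permutations (preserving the second
coordinate, acting within copies of `G₁`) and `α₂` is a row permutation (preserving the
first coordinate, acting within copies of `G₂`). -/
theorem stmt_3 {V₁ V₂ : Type*} [Fintype V₁] [Fintype V₂]
    (G₁ : SimpleGraph V₁) (G₂ : SimpleGraph V₂) (D₁ D₂ : ℕ)
    (h₁ : CanRoute G₁ D₁) (h₂ : CanRoute G₂ D₂) :
    ∀ α : Equiv.Perm (V₁ × V₂),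
      (∃ l : List (Equiv.Perm (V₁ × V₂)),
        l.length ≤ 2 * D₁ + D₂ ∧
        (∀ β ∈ l, IsSimplePerm (SimpleGraph.boxProd G₁ G₂) β) ∧ l.prod = α) ∧
      (∃ α₁ α₂ α₁' : Equiv.Perm (V₁ × V₂),
        (∀ x, (α₁ x).2 = x.2) ∧ (∀ x, (α₁' x).2 = x.2) ∧ (∀ x, (α₂ x).1 = x.1) ∧
        α = α₁ * α₂ * α₁') := by
  intro α
  obtain ⟨α₁, α₂, α₁', p1, p2, p3, heq⟩ := decomp_aux α
  constructor
  · obtain ⟨l₁, hl₁, hs₁, hp₁⟩ := route_left G₁ G₂ h₁ α₁ p1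
    obtain ⟨l₂, hl₂, hs₂, hp₂⟩ := route_right G₁ G₂ h₂ α₂ p3
    obtain ⟨l₃, hl₃, hs₃, hp₃⟩ := route_left G₁ G₂ h₁ α₁' p2
    refine ⟨l₁ ++ l₂ ++ l₃, ?_, ?_, ?_⟩
    · simp only [List.length_append]
      omega
    · intro β hβ
      simp only [List.mem_append] at hβ
      rcases hβ with (hβ | hβ) | hβ
      · exact hs₁ β hβ
      · exact hs₂ β hβ
      · exact hs₃ β hβ
    · rw [List.prod_append, List.prod_append, hp₁, hp₂, hp₃, heq]
  · exact ⟨α₁, α₂, α₁', p1, p2, p3, heq⟩
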